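/- Let n be a positive integer divisible by 4 and let π be any permutation of {1, …, n/4}. Then there exists a member L of the family F_n such that the combinatorial onion layer decomposition (S_1, …, S_k) of the point set of L satisfies: k = n/4, each layer S_j contains exactly one point of Q, and for every i ∈ {1, …, n/4}, the point q_i lies in layer S_{n/4 + 1 − π(i)}. -/

import Mathlib

/-- The extreme points (vertices) of the convex hull of `Q`: the points `q ∈ Q` that do
not lie in the convex hull of `Q \ {q}`. -/
def hullVertices (Q : Set (ℝ × ℝ)) : Set (ℝ × ℝ) :=
  {q ∈ Q | q ∉ convexHull ℝ (Q \ {q})}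

/-- `L = (S_1, …, S_k)` is a combinatorial onion layer decomposition of `P`. -/
def IsOnionDecomp (P : Set (ℝ × ℝ)) (L : List (Set (ℝ × ℝ))) : Prop :=
  L ≠ [] ∧
  (∀ S ∈ L, S.Nonempty) ∧
  List.Pairwise Disjoint L ∧
  (⋃₀ {S | S ∈ L}) = P ∧
  ∀ i < L.length,
    L.getD i ∅ = hullVertices (P \ ⋃ j ∈ Finset.range i, L.getD j ∅)

/-- Membership in the family `F_n` (with `n = 4*m`). -/
def InFamilyF (n m : ℕ) (p1 p2 p3 q : Fin m → ℝ × ℝ) : Prop :=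
  (∀ i, p1 i ∈ openSegment ℝ
      (((-2 : ℝ), (-2 * (n : ℝ) - 6)))
      (((0 : ℝ), (-2 * (n : ℝ) - 4)))) ∧
  StrictMono (fun i => (p1 i).1) ∧
  (∀ i, p2 i ∈ openSegment ℝ (((0 : ℝ), (0 : ℝ))) (((2 : ℝ), (-2 : ℝ)))) ∧
  StrictMono (fun i => (p2 i).1) ∧
  (∀ i, p3 i ∈ openSegment ℝ
      ((2 * (n : ℝ) + 2, -2 * (n : ℝ) - 2))
      ((2 * (n : ℝ) + 4, -2 * (n : ℝ) - 4))) ∧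
  StrictMono (fun i => (p3 i).1) ∧
  (∀ i : Fin m, q i ∈ openSegment ℝ
      ((2 * ((i : ℕ) + 1 : ℝ) + 1, -(2 * ((i : ℕ) + 1 : ℝ)) - 1))
      ((2 * ((i : ℕ) + 1 : ℝ) + 2, -(2 * ((i : ℕ) + 1 : ℝ)))))

section Aux

lemma not_mem_hull_of_sep (a b : ℝ) (p : ℝ×ℝ) (Q : Set (ℝ×ℝ))
    (h : ∀ x ∈ Q, a*x.1 + b*x.2 < a*p.1 + b*p.2) :
    p ∉ convexHull ℝ Q := by
  intro hp
  have hlin : IsLinearMap ℝ (fun z : ℝ×ℝ => a*z.1 + b*z.2) :=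
    ⟨by intro x y; simp; ring, by intro c x; simp; ring⟩
  have hconv : Convex ℝ {z : ℝ×ℝ | a*z.1 + b*z.2 < a*p.1+b*p.2} :=
    convex_halfSpace_lt hlin _
  have := convexHull_min (fun x hx => h x hx) hconv hp
  have h2 : a*p.1 + b*p.2 < a*p.1 + b*p.2 := this
  linarith

lemma mem_hull3 (A B C z : ℝ×ℝ) (α β γ : ℝ) (hα : 0 ≤ α) (hβ : 0 ≤ β) (hγ : 0 ≤ γ)
    (hs : 0 < α + β + γ)
    (h1 : α*A.1 + β*B.1 + γ*C.1 = (α+β+γ)*z.1)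
    (h2 : α*A.2 + β*B.2 + γ*C.2 = (α+β+γ)*z.2) :
    z ∈ convexHull ℝ ({A, B, C} : Set (ℝ×ℝ)) := by
  have := Finset.centerMass_mem_convexHull (t := (Finset.univ : Finset (Fin 3)))
    (w := ![α, β, γ]) (z := ![A, B, C]) (s := ({A, B, C} : Set (ℝ×ℝ)))
    (by intro i _; fin_cases i <;> simpa)
    (by simp [Fin.sum_univ_three]; linarith)
    (by intro i _; fin_cases i <;> simp [Set.mem_insert_iff])
  convert this using 1
  rw [Finset.centerMass]
  simp only [Fin.sum_univ_three]
  have hne : α + β + γ ≠ 0 := ne_of_gt hs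
  have e1 : z.1 = (α*A.1 + β*B.1 + γ*C.1)/(α+β+γ) := by field_simp; linarith
  have e2 : z.2 = (α*A.2 + β*B.2 + γ*C.2)/(α+β+γ) := by field_simp; linarith
  apply Prod.ext <;> (simp [Matrix.cons_val_zero, Matrix.cons_val_one, e1, e2, div_eq_inv_mul]; ring)

lemma mem_hull2 (A B z : ℝ×ℝ) (α β : ℝ) (hα : 0 ≤ α) (hβ : 0 ≤ β)
    (hs : 0 < α + β)
    (h1 : α*A.1 + β*B.1 = (α+β)*z.1)
    (h2 : α*A.2 + β*B.2 = (α+β)*z.2) :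
    z ∈ convexHull ℝ ({A, B} : Set (ℝ×ℝ)) := by
  have h := mem_hull3 A B B z α β 0 hα hβ le_rfl (by linarith)
    (by linarith) (by linarith)
  simpa using h

lemma hide_seg (a b z : ℝ×ℝ) (hya : a.2 = -a.1) (hyb : b.2 = -b.1) (hyz : z.2 = -z.1)
    (h1 : a.1 ≤ z.1) (h2 : z.1 ≤ b.1) (h3 : a.1 < b.1) :
    z ∈ convexHull ℝ ({a, b} : Set (ℝ×ℝ)) := by
  apply mem_hull2 a b z (b.1 - z.1) (z.1 - a.1) (by linarith) (by linarith) (by linarith)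
  · ring
  · rw [hya, hyb, hyz]; ring

lemma hide_p1_abs (W : ℝ) (a b c z : ℝ×ℝ) (hW : 1 ≤ W)
    (hya : a.2 = -a.1) (hyb : b.2 = -b.1)
    (hyc : c.2 = c.1 - (W+4)) (hyz : z.2 = z.1 - (W+4))
    (ha0 : 0 ≤ a.1) (ha2 : a.1 ≤ 2) (hb : W + 2 ≤ b.1)
    (hcz : c.1 < z.1) (hza : z.1 < a.1) :
    z ∈ convexHull ℝ ({c, a, b} : Set (ℝ×ℝ)) := by
  have hzb : z.1 < b.1 := by linarith
  have k1 : 0 ≤ 2*b.1-W-4 := by linarith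
  have k2 : 0 ≤ W+4-2*a.1 := by linarith
  refine mem_hull3 c a b z
    ((2*b.1-W-4)*(a.1-z.1) + (W+4-2*a.1)*(b.1-z.1))
    ((2*b.1-W-4)*(z.1-c.1))
    ((W+4-2*a.1)*(z.1-c.1)) ?_ ?_ ?_ ?_ ?_ ?_
  · nlinarith
  · nlinarith
  · nlinarith
  · nlinarith
  · ring
  · rw [hya, hyb, hyc, hyz]; ring

lemma hide_q_abs (W h H : ℝ) (a t b z : ℝ×ℝ) (hW : 8 ≤ W)
    (hya : a.2 = -a.1) (hyb : b.2 = -b.1)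
    (hyt : t.1 + t.2 = H) (hyz : z.1 + z.2 = h)
    (ha0 : 0 ≤ a.1) (ha2 : a.1 ≤ 2)
    (hz3 : 3 ≤ z.1) (hz : 4*z.1 ≤ W + 8)
    (ht : 4*t.1 ≤ W + 8) (ht0 : 0 ≤ t.1)
    (hb : W + 2 ≤ b.1)
    (hh : 0 < h) (hH : 0 < H) (hhH : h*(W+4) ≤ H) :
    z ∈ convexHull ℝ ({a, t, b} : Set (ℝ×ℝ)) := by
  have hhH' : h < H := by nlinarith
  have t2 : t.2 = H - t.1 := by linarith
  have z2 : z.2 = h - z.1 := by linarith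
  refine mem_hull3 a t b z
    ((H-h)*b.1 + h*t.1 - H*z.1)
    (h*(b.1-a.1))
    (H*z.1 - h*t.1 - (H-h)*a.1) ?_ ?_ ?_ ?_ ?_ ?_
  · nlinarith [mul_nonneg hh.le ht0, mul_le_mul_of_nonneg_left hb (by linarith : (0:ℝ) ≤ H - h),
      mul_le_mul_of_nonneg_left hz hH.le]
  · nlinarith
  · nlinarith [mul_le_mul_of_nonneg_left ht hh.le, mul_le_mul_of_nonneg_left hz3 hH.le,
      mul_le_mul_of_nonneg_left ha2 (by linarith : (0:ℝ) ≤ H - h)]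
  · nlinarith
  · ring
  · rw [hya, hyb, t2, z2]; ring

noncomputable def tv (m i : ℕ) : ℝ := ((i:ℝ)+1)/((m:ℝ)+1)
noncomputable def pp1 (m i : ℕ) : ℝ×ℝ := (-2 + 2*tv m i, -(8*(m:ℝ)) - 6 + 2*tv m i)
noncomputable def pp2 (m i : ℕ) : ℝ×ℝ := (2*tv m i, -(2*tv m i))
noncomputable def pp3 (m i : ℕ) : ℝ×ℝ := (8*(m:ℝ) + 2 + 2*tv m i, -(8*(m:ℝ)) - 2 - 2*tv m i)
noncomputable def ev (m : ℕ) : ℝ := 1/(8*(m:ℝ)+4)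
noncomputable def sv (m : ℕ) (π : Equiv.Perm (Fin m)) (i : Fin m) : ℝ := ev m ^ (m - (π i : ℕ))
noncomputable def qq (m : ℕ) (π : Equiv.Perm (Fin m)) (i : Fin m) : ℝ×ℝ :=
  (2*((i:ℕ):ℝ)+3 + sv m π i, -(2*((i:ℕ):ℝ))-3 + sv m π i)

lemma tv_pos (m i : ℕ) : 0 < tv m i := by unfold tv; positivity

lemma tv_lt_one {m i : ℕ} (h : i < m) : tv m i < 1 := by
  unfold tv
  rw [div_lt_one (by positivity)]
  have : (i:ℝ) < (m:ℝ) := by exact_mod_cast h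
  linarith

lemma tv_mono {m i i' : ℕ} (h : i < i') : tv m i < tv m i' := by
  unfold tv
  have hi : (i:ℝ) + 1 < (i':ℝ) + 1 := by exact_mod_cast Nat.succ_lt_succ h
  have hm : (0:ℝ) < (m:ℝ)+1 := by positivity
  exact div_lt_div_of_pos_right hi hm

lemma ev_pos (m : ℕ) : 0 < ev m := by unfold ev; positivity

lemma ev_lt_one (m : ℕ) : ev m < 1 := by
  unfold ev
  rw [div_lt_one (by positivity)]
  have : (0:ℝ) ≤ (m:ℝ) := Nat.cast_nonneg m
  linarith

lemma sv_pos (m : ℕ) (π : Equiv.Perm (Fin m)) (i : Fin m) : 0 < sv m π i :=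
  pow_pos (ev_pos m) _

lemma sv_lt_one (m : ℕ) (π : Equiv.Perm (Fin m)) (i : Fin m) : sv m π i < 1 := by
  unfold sv
  apply pow_lt_one₀ (le_of_lt (ev_pos m)) (ev_lt_one m)
  have := (π i).2
  omega

end Aux
section Aux2

variable {m : ℕ} {π : Equiv.Perm (Fin m)}

-- coordinate bound lemmas
lemma pp1_fst {i : ℕ} (hi : i < m) : -2 < (pp1 m i).1 ∧ (pp1 m i).1 < 0 := by
  have h0 := tv_pos m i; have h1 := tv_lt_one hi
  constructor <;> (simp [pp1]; linarith)

lemma pp2_fst {i : ℕ} (hi : i < m) : 0 < (pp2 m i).1 ∧ (pp2 m i).1 < 2 := by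
  have h0 := tv_pos m i; have h1 := tv_lt_one hi
  constructor <;> (simp [pp2]; linarith)

lemma pp3_fst {i : ℕ} (hi : i < m) : 8*(m:ℝ)+2 < (pp3 m i).1 ∧ (pp3 m i).1 < 8*(m:ℝ)+4 := by
  have h0 := tv_pos m i; have h1 := tv_lt_one hi
  constructor <;> (simp [pp3]; linarith)

lemma qq_fst (i : Fin m) : 2*((i:ℕ):ℝ)+3 < (qq m π i).1 ∧ (qq m π i).1 < 2*((i:ℕ):ℝ)+4 := by
  have h0 := sv_pos m π i; have h1 := sv_lt_one m π i
  constructor <;> (simp [qq]; linarith)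

lemma qq_fst' (i : Fin m) : 3 ≤ (qq m π i).1 ∧ (qq m π i).1 ≤ 2*(m:ℝ)+2 := by
  obtain ⟨h1, h2⟩ := qq_fst (π := π) i
  have hi : ((i:ℕ):ℝ) + 1 ≤ (m:ℝ) := by exact_mod_cast i.2
  have hi0 : (0:ℝ) ≤ ((i:ℕ):ℝ) := Nat.cast_nonneg _
  constructor <;> linarith

-- sums
lemma pp1_sum (i : ℕ) : (pp1 m i).1 + (pp1 m i).2 = 4*tv m i - 8*(m:ℝ) - 8 := by
  simp [pp1]; ring

lemma pp2_sum (i : ℕ) : (pp2 m i).1 + (pp2 m i).2 = 0 := by simp [pp2]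

lemma pp3_sum (i : ℕ) : (pp3 m i).1 + (pp3 m i).2 = 0 := by simp [pp3]

lemma qq_sum (i : Fin m) : (qq m π i).1 + (qq m π i).2 = 2 * sv m π i := by
  simp [qq]; ring

-- injectivity
lemma ne_of_fst {a b : ℝ×ℝ} (h : a.1 ≠ b.1) : a ≠ b := by
  intro he; rw [he] at h; exact h rfl

lemma pp1_inj {i i' : ℕ} (h : pp1 m i = pp1 m i') : i = i' := by
  by_contra hne
  rcases Nat.lt_or_ge i i' with hl | hg
  · exact absurd (congrArg Prod.fst h) (by simp [pp1]; have := tv_mono (m := m) hl; intro hc; linarith)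
  · have hl : i' < i := by omega
    exact absurd (congrArg Prod.fst h) (by simp [pp1]; have := tv_mono (m := m) hl; intro hc; linarith)

lemma pp2_inj {i i' : ℕ} (h : pp2 m i = pp2 m i') : i = i' := by
  by_contra hne
  rcases Nat.lt_or_ge i i' with hl | hg
  · exact absurd (congrArg Prod.fst h) (by simp [pp2]; have := tv_mono (m := m) hl; intro hc; linarith)
  · have hl : i' < i := by omega
    exact absurd (congrArg Prod.fst h) (by simp [pp2]; have := tv_mono (m := m) hl; intro hc; linarith)

lemma pp3_inj {i i' : ℕ} (h : pp3 m i = pp3 m i') : i = i' := by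
  by_contra hne
  rcases Nat.lt_or_ge i i' with hl | hg
  · exact absurd (congrArg Prod.fst h) (by simp [pp3]; have := tv_mono (m := m) hl; intro hc; linarith)
  · have hl : i' < i := by omega
    exact absurd (congrArg Prod.fst h) (by simp [pp3]; have := tv_mono (m := m) hl; intro hc; linarith)

lemma qq_inj {i i' : Fin m} (h : qq m π i = qq m π i') : i = i' := by
  by_contra hne
  have hv : (i:ℕ) ≠ (i':ℕ) := fun hc => hne (Fin.ext hc)
  have hf := congrArg Prod.fst h
  obtain ⟨a1, a2⟩ := qq_fst (π := π) i
  obtain ⟨b1, b2⟩ := qq_fst (π := π) i'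
  rcases Nat.lt_or_ge (i:ℕ) (i':ℕ) with hl | hg
  · have : ((i:ℕ):ℝ) + 1 ≤ ((i':ℕ):ℝ) := by exact_mod_cast hl
    linarith [hf.le]
  · have hl : (i':ℕ) < (i:ℕ) := by omega
    have : ((i':ℕ):ℝ) + 1 ≤ ((i:ℕ):ℝ) := by exact_mod_cast hl
    linarith [hf.ge]

-- cross-family distinctness
lemma ne12 {i i' : ℕ} (hi : i < m) (hi' : i' < m) : pp1 m i ≠ pp2 m i' := by
  apply ne_of_fst
  obtain ⟨a1, a2⟩ := pp1_fst (m := m) hi; obtain ⟨b1, b2⟩ := pp2_fst (m := m) hi'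
  intro h; linarith

lemma ne13 {i i' : ℕ} (hi : i < m) (hi' : i' < m) : pp1 m i ≠ pp3 m i' := by
  apply ne_of_fst
  obtain ⟨a1, a2⟩ := pp1_fst (m := m) hi; obtain ⟨b1, b2⟩ := pp3_fst (m := m) hi'
  have : (0:ℝ) ≤ (m:ℝ) := Nat.cast_nonneg m
  intro h; linarith

lemma ne1q {i : ℕ} (hi : i < m) (i' : Fin m) : pp1 m i ≠ qq m π i' := by
  apply ne_of_fst
  obtain ⟨a1, a2⟩ := pp1_fst (m := m) hi; obtain ⟨b1, b2⟩ := qq_fst' (π := π) i'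
  intro h; linarith

lemma ne23 {i i' : ℕ} (hi : i < m) (hi' : i' < m) : pp2 m i ≠ pp3 m i' := by
  apply ne_of_fst
  obtain ⟨a1, a2⟩ := pp2_fst (m := m) hi; obtain ⟨b1, b2⟩ := pp3_fst (m := m) hi'
  have : (0:ℝ) ≤ (m:ℝ) := Nat.cast_nonneg m
  intro h; linarith

lemma ne2q {i : ℕ} (hi : i < m) (i' : Fin m) : pp2 m i ≠ qq m π i' := by
  apply ne_of_fst
  obtain ⟨a1, a2⟩ := pp2_fst (m := m) hi; obtain ⟨b1, b2⟩ := qq_fst' (π := π) i'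
  intro h; linarith

lemma ne3q {i : ℕ} (hi : i < m) (i' : Fin m) : pp3 m i ≠ qq m π i' := by
  apply ne_of_fst
  obtain ⟨a1, a2⟩ := pp3_fst (m := m) hi; obtain ⟨b1, b2⟩ := qq_fst' (π := π) i'
  have : (0:ℝ) ≤ (m:ℝ) := Nat.cast_nonneg m
  intro h; linarith

end Aux2
section Aux3

variable {m : ℕ} {π : Equiv.Perm (Fin m)}

def Rem (m : ℕ) (π : Equiv.Perm (Fin m)) (j : ℕ) : Set (ℝ×ℝ) :=
  {x | (∃ i : Fin m, j ≤ (i:ℕ) ∧ x = pp1 m i) ∨ (∃ i : Fin m, j ≤ (i:ℕ) ∧ x = pp2 m i) ∨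
       (∃ i : Fin m, (i:ℕ) + j < m ∧ x = pp3 m i) ∨
       (∃ i : Fin m, ((π i : Fin m):ℕ) + j < m ∧ x = qq m π i)}

noncomputable def qidx (m : ℕ) (π : Equiv.Perm (Fin m)) (hm : 0 < m) (j : ℕ) : Fin m :=
  π.symm ⟨m-1-j, by omega⟩

noncomputable def lay (m : ℕ) (π : Equiv.Perm (Fin m)) (hm : 0 < m) (j : ℕ) : Set (ℝ×ℝ) :=
  {pp1 m j, pp2 m j, pp3 m (m-1-j), qq m π (qidx m π hm j)}

lemma qidx_pi (hm : 0 < m) (j : ℕ) : ((π (qidx m π hm j)):ℕ) = m-1-j := by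
  unfold qidx; rw [Equiv.apply_symm_apply]

lemma sv_qidx (hm : 0 < m) {j : ℕ} (hj : j < m) :
    sv m π (qidx m π hm j) = ev m ^ (j+1) := by
  unfold sv
  rw [qidx_pi]
  congr 1
  omega

lemma lay_subset_Rem (hm : 0 < m) {j : ℕ} (hj : j < m) :
    lay m π hm j ⊆ Rem m π j := by
  intro x hx
  rcases hx with rfl | rfl | rfl | rfl
  · exact Or.inl ⟨⟨j, hj⟩, le_rfl, rfl⟩
  · exact Or.inr (Or.inl ⟨⟨j, hj⟩, le_rfl, rfl⟩)
  · exact Or.inr (Or.inr (Or.inl ⟨⟨m-1-j, by omega⟩, by show m-1-j+j < m; omega, rfl⟩))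
  · exact Or.inr (Or.inr (Or.inr ⟨qidx m π hm j, by rw [qidx_pi]; omega, rfl⟩))

lemma vert_p2 {j : ℕ} (hj : j < m) :
    pp2 m j ∉ convexHull ℝ (Rem m π j \ {pp2 m j}) := by
  apply not_mem_hull_of_sep 0 1
  rintro x ⟨hx, hne⟩
  simp only [Set.mem_singleton_iff] at hne
  have hu0 := tv_pos m j; have hu1 := tv_lt_one hj
  have key : x.2 < (pp2 m j).2 := by
    rcases hx with ⟨i,hi,rfl⟩|⟨i,hi,rfl⟩|⟨i,hi,rfl⟩|⟨i,hi,rfl⟩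
    · have h1 := tv_lt_one i.2; have h0 := tv_pos m (i:ℕ)
      have hm8 : (0:ℝ) ≤ 8*(m:ℝ) := by positivity
      simp only [pp1, pp2]; linarith
    · have hij : j < (i:ℕ) := by
        rcases Nat.eq_or_lt_of_le hi with h|h
        · exact absurd (congrArg (pp2 m) h.symm) hne
        · exact h
      have := tv_mono (m := m) hij
      simp only [pp2]; linarith
    · have h0 := tv_pos m (i:ℕ)
      have hm8 : (0:ℝ) ≤ 8*(m:ℝ) := by positivity
      simp only [pp3, pp2]; linarith
    · have h1 := sv_lt_one m π i
      have h0 : (0:ℝ) ≤ ((i:ℕ):ℝ) := Nat.cast_nonneg _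
      simp only [qq, pp2]; linarith
  linarith

lemma vert_p3 (hm : 0 < m) {j : ℕ} (hj : j < m) :
    pp3 m (m-1-j) ∉ convexHull ℝ (Rem m π j \ {pp3 m (m-1-j)}) := by
  apply not_mem_hull_of_sep 1 0
  rintro x ⟨hx, hne⟩
  simp only [Set.mem_singleton_iff] at hne
  have hu0 := tv_pos m (m-1-j)
  have hmr : (0:ℝ) ≤ (m:ℝ) := Nat.cast_nonneg m
  have key : x.1 < (pp3 m (m-1-j)).1 := by
    rcases hx with ⟨i,hi,rfl⟩|⟨i,hi,rfl⟩|⟨i,hi,rfl⟩|⟨i,hi,rfl⟩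
    · have h1 := tv_lt_one i.2
      simp only [pp1, pp3]; linarith
    · have h1 := tv_lt_one i.2
      simp only [pp2, pp3]; linarith
    · have hik : (i:ℕ) < m-1-j := by
        rcases Nat.eq_or_lt_of_le (by omega : (i:ℕ) ≤ m-1-j) with h|h
        · exact absurd (congrArg (pp3 m) h) hne
        · exact h
      have := tv_mono (m := m) hik
      simp only [pp3]; linarith
    · obtain ⟨b1, b2⟩ := qq_fst' (π := π) i
      simp only [pp3]
      linarith
  linarith

lemma vert_p1 {j : ℕ} (hj : j < m) :
    pp1 m j ∉ convexHull ℝ (Rem m π j \ {pp1 m j}) := by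
  apply not_mem_hull_of_sep (-1) (-1)
  rintro x ⟨hx, hne⟩
  simp only [Set.mem_singleton_iff] at hne
  have hu1 := tv_lt_one hj
  have hmr : (0:ℝ) ≤ (m:ℝ) := Nat.cast_nonneg m
  have hsumj := pp1_sum (m := m) j
  have key : (pp1 m j).1 + (pp1 m j).2 < x.1 + x.2 := by
    rcases hx with ⟨i,hi,rfl⟩|⟨i,hi,rfl⟩|⟨i,hi,rfl⟩|⟨i,hi,rfl⟩
    · have hij : j < (i:ℕ) := by
        rcases Nat.eq_or_lt_of_le hi with h|h
        · exact absurd (congrArg (pp1 m) h.symm) hne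
        · exact h
      have := tv_mono (m := m) hij
      rw [hsumj, pp1_sum]; linarith
    · rw [hsumj, pp2_sum]; linarith
    · rw [hsumj, pp3_sum]; linarith
    · rw [hsumj, qq_sum]
      have := sv_pos m π i; linarith
  linarith

lemma vert_q (hm : 0 < m) {j : ℕ} (hj : j < m) :
    qq m π (qidx m π hm j) ∉ convexHull ℝ (Rem m π j \ {qq m π (qidx m π hm j)}) := by
  apply not_mem_hull_of_sep 1 1
  rintro x ⟨hx, hne⟩
  simp only [Set.mem_singleton_iff] at hne
  have hsumt : (qq m π (qidx m π hm j)).1 + (qq m π (qidx m π hm j)).2 = 2 * ev m ^ (j+1) := by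
    rw [qq_sum, sv_qidx hm hj]
  have hpow : (0:ℝ) < ev m ^ (j+1) := pow_pos (ev_pos m) _
  have hmr : (0:ℝ) ≤ (m:ℝ) := Nat.cast_nonneg m
  have hu1 := tv_lt_one hj
  have key : x.1 + x.2 < (qq m π (qidx m π hm j)).1 + (qq m π (qidx m π hm j)).2 := by
    rw [hsumt]
    rcases hx with ⟨i,hi,rfl⟩|⟨i,hi,rfl⟩|⟨i,hi,rfl⟩|⟨i,hi,rfl⟩
    · rw [pp1_sum]; have := tv_lt_one i.2; linarith
    · rw [pp2_sum]; linarith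
    · rw [pp3_sum]; linarith
    · rw [qq_sum]
      have hiq : i ≠ qidx m π hm j := by
        intro hc; exact hne (congrArg (qq m π) hc)
      have hpi : ((π i):ℕ) ≠ m-1-j := by
        intro hc
        apply hiq
        have : π i = π (qidx m π hm j) := Fin.ext (by rw [qidx_pi]; exact hc)
        exact π.injective this
      have hexp : j + 2 ≤ m - ((π i):ℕ) := by omega
      have h1 : sv m π i ≤ ev m ^ (j+2) :=
        pow_le_pow_of_le_one (ev_pos m).le (ev_lt_one m).le hexp
      have h2 : ev m ^ (j+2) < ev m ^ (j+1) := by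
        rw [pow_succ (ev m) (j+1)]
        nlinarith [pow_pos (ev_pos m) (j+1), ev_pos m, ev_lt_one m]
      linarith
  linarith

end Aux3
section Aux4

variable {m : ℕ} {π : Equiv.Perm (Fin m)}

lemma m_cast_ge {m : ℕ} (hm : 0 < m) : (1:ℝ) ≤ (m:ℝ) := by exact_mod_cast hm

lemma hid_p1 (hm : 0 < m) {j i : ℕ} (hj : j < m) (hji : j < i) (hi : i < m) :
    pp1 m i ∈ convexHull ℝ (Rem m π j \ {pp1 m i}) := by
  have hk : m-1-j < m := by omega
  have hsub : ({pp1 m j, pp2 m j, pp3 m (m-1-j)} : Set (ℝ×ℝ)) ⊆ Rem m π j \ {pp1 m i} := by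
    rintro y (rfl|rfl|rfl)
    · exact ⟨Or.inl ⟨⟨j, hj⟩, le_rfl, rfl⟩, by
        simp only [Set.mem_singleton_iff]; exact fun h => absurd (pp1_inj h) (by omega)⟩
    · exact ⟨Or.inr (Or.inl ⟨⟨j, hj⟩, le_rfl, rfl⟩), by
        simp only [Set.mem_singleton_iff]; exact (ne12 hi hj).symm⟩
    · exact ⟨Or.inr (Or.inr (Or.inl ⟨⟨m-1-j, hk⟩, by show m-1-j+j < m; omega, rfl⟩)), by
        simp only [Set.mem_singleton_iff]; exact (ne13 hi hk).symm⟩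
  apply convexHull_mono hsub
  have h1m := m_cast_ge hm
  have hu0 := tv_pos m j; have hu1 := tv_lt_one hj
  have hr0 := tv_pos m i; have hr1 := tv_lt_one hi
  have hv0 := tv_pos m (m-1-j)
  have hmono := tv_mono (m := m) hji
  exact hide_p1_abs (8*(m:ℝ)) (pp2 m j) (pp3 m (m-1-j)) (pp1 m j) (pp1 m i)
    (by linarith)
    (by simp [pp2])
    (by simp [pp3]; ring)
    (by simp [pp1]; ring)
    (by simp [pp1]; ring)
    (by simp [pp2]; linarith)
    (by simp [pp2]; linarith)
    (by simp [pp3]; linarith)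
    (by simp only [pp1]; simp; linarith)
    (by simp only [pp1, pp2]; simp; linarith)

lemma hid_p2 {j i : ℕ} (hj : j < m) (hji : j < i) (hi : i < m) :
    pp2 m i ∈ convexHull ℝ (Rem m π j \ {pp2 m i}) := by
  have hk : m-1-j < m := by omega
  have hsub : ({pp2 m j, pp3 m (m-1-j)} : Set (ℝ×ℝ)) ⊆ Rem m π j \ {pp2 m i} := by
    rintro y (rfl|rfl)
    · exact ⟨Or.inr (Or.inl ⟨⟨j, hj⟩, le_rfl, rfl⟩), by
        simp only [Set.mem_singleton_iff]; exact fun h => absurd (pp2_inj h) (by omega)⟩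
    · exact ⟨Or.inr (Or.inr (Or.inl ⟨⟨m-1-j, hk⟩, by show m-1-j+j < m; omega, rfl⟩)), by
        simp only [Set.mem_singleton_iff]; exact (ne23 hi hk).symm⟩
  apply convexHull_mono hsub
  have h1m := m_cast_ge (by omega : 0 < m)
  have hu0 := tv_pos m j; have hu1 := tv_lt_one hj
  have hr0 := tv_pos m i; have hr1 := tv_lt_one hi
  have hv0 := tv_pos m (m-1-j)
  have hmono := tv_mono (m := m) hji
  exact hide_seg (pp2 m j) (pp3 m (m-1-j)) (pp2 m i)
    (by simp [pp2]) (by simp [pp3]; ring) (by simp [pp2])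
    (by simp [pp2]; linarith) (by simp [pp2, pp3]; linarith) (by simp [pp2, pp3]; linarith)

lemma hid_p3 {j i : ℕ} (hj : j < m) (hik : i < m-1-j) :
    pp3 m i ∈ convexHull ℝ (Rem m π j \ {pp3 m i}) := by
  have hk : m-1-j < m := by omega
  have hi : i < m := by omega
  have hsub : ({pp2 m j, pp3 m (m-1-j)} : Set (ℝ×ℝ)) ⊆ Rem m π j \ {pp3 m i} := by
    rintro y (rfl|rfl)
    · exact ⟨Or.inr (Or.inl ⟨⟨j, hj⟩, le_rfl, rfl⟩), by
        simp only [Set.mem_singleton_iff]; exact ne23 hj hi⟩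
    · exact ⟨Or.inr (Or.inr (Or.inl ⟨⟨m-1-j, hk⟩, by show m-1-j+j < m; omega, rfl⟩)), by
        simp only [Set.mem_singleton_iff]; exact fun h => absurd (pp3_inj h) (by omega)⟩
  apply convexHull_mono hsub
  have h1m := m_cast_ge (by omega : 0 < m)
  have hu0 := tv_pos m j; have hu1 := tv_lt_one hj
  have hr0 := tv_pos m i; have hr1 := tv_lt_one hi
  have hv0 := tv_pos m (m-1-j)
  have hmono := tv_mono (m := m) hik
  exact hide_seg (pp2 m j) (pp3 m (m-1-j)) (pp3 m i)
    (by simp [pp2]) (by simp [pp3]; ring) (by simp [pp3]; ring)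
    (by simp [pp2, pp3]; linarith) (by simp [pp3]; linarith) (by simp [pp2, pp3]; linarith)

lemma hid_q (hm : 0 < m) {j : ℕ} (hj : j < m) (i : Fin m)
    (hcond : ((π i):ℕ) + j + 1 < m) :
    qq m π i ∈ convexHull ℝ (Rem m π j \ {qq m π i}) := by
  have hk : m-1-j < m := by omega
  have hsub : ({pp2 m j, qq m π (qidx m π hm j), pp3 m (m-1-j)} : Set (ℝ×ℝ)) ⊆
      Rem m π j \ {qq m π i} := by
    rintro y (rfl|rfl|rfl)
    · exact ⟨Or.inr (Or.inl ⟨⟨j, hj⟩, le_rfl, rfl⟩), by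
        simp only [Set.mem_singleton_iff]; exact ne2q hj i⟩
    · refine ⟨Or.inr (Or.inr (Or.inr ⟨qidx m π hm j, by rw [qidx_pi]; omega, rfl⟩)), ?_⟩
      simp only [Set.mem_singleton_iff]
      intro h
      have := qq_inj h
      have h2 := qidx_pi (π := π) hm j
      rw [this] at h2
      omega
    · exact ⟨Or.inr (Or.inr (Or.inl ⟨⟨m-1-j, hk⟩, by show m-1-j+j < m; omega, rfl⟩)), by
        simp only [Set.mem_singleton_iff]; exact ne3q hk i⟩
  apply convexHull_mono hsub
  have h1m := m_cast_ge hm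
  have hu0 := tv_pos m j; have hu1 := tv_lt_one hj
  have hv0 := tv_pos m (m-1-j)
  have hsz := sv_pos m π i
  have hqz := qq_fst' (π := π) i
  have hqt := qq_fst' (π := π) (qidx m π hm j)
  have hpow : (0:ℝ) < ev m ^ (j+1) := pow_pos (ev_pos m) _
  have hev : ev m * (8*(m:ℝ)+4) = 1 := by
    unfold ev; field_simp
  have hhH : (2 * sv m π i) * (8*(m:ℝ)+4) ≤ 2 * ev m ^ (j+1) := by
    have hexp : j + 2 ≤ m - ((π i):ℕ) := by omega
    have h1 : sv m π i ≤ ev m ^ (j+2) :=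
      pow_le_pow_of_le_one (ev_pos m).le (ev_lt_one m).le hexp
    have h2 : (2 * ev m ^ (j+2)) * (8*(m:ℝ)+4) = 2 * ev m ^ (j+1) := by
      rw [pow_succ]
      calc 2 * (ev m ^ (j+1) * ev m) * (8*(m:ℝ)+4)
          = 2 * ev m ^ (j+1) * (ev m * (8*(m:ℝ)+4)) := by ring
        _ = 2 * ev m ^ (j+1) := by rw [hev, mul_one]
    nlinarith [h1]
  exact hide_q_abs (8*(m:ℝ)) (2 * sv m π i) (2 * ev m ^ (j+1))
    (pp2 m j) (qq m π (qidx m π hm j)) (pp3 m (m-1-j)) (qq m π i)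
    (by linarith)
    (by simp [pp2])
    (by simp [pp3]; ring)
    (by rw [qq_sum, sv_qidx hm hj])
    (by rw [qq_sum])
    (by simp [pp2]; linarith)
    (by simp [pp2]; linarith)
    hqz.1
    (by linarith [hqz.2])
    (by linarith [hqt.2])
    (by linarith [hqt.1])
    (by simp [pp3]; linarith)
    (by linarith)
    (by linarith)
    hhH

end Aux4
section Aux5

variable {m : ℕ} {π : Equiv.Perm (Fin m)}

lemma hv_eq (hm : 0 < m) {j : ℕ} (hj : j < m) :
    hullVertices (Rem m π j) = lay m π hm j := by
  apply Set.Subset.antisymm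
  · intro x hx
    simp only [hullVertices, Set.mem_setOf_eq] at hx
    obtain ⟨hxR, hxV⟩ := hx
    by_contra hlay
    simp only [lay, Set.mem_insert_iff, Set.mem_singleton_iff, not_or] at hlay
    obtain ⟨h1, h2, h3, h4⟩ := hlay
    rcases hxR with ⟨i,hi,rfl⟩|⟨i,hi,rfl⟩|⟨i,hi,rfl⟩|⟨i,hi,rfl⟩
    · have hne : (i:ℕ) ≠ j := fun hc => h1 (congrArg (pp1 m) hc)
      exact hxV (hid_p1 hm hj (by omega) i.2)
    · have hne : (i:ℕ) ≠ j := fun hc => h2 (congrArg (pp2 m) hc)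
      exact hxV (hid_p2 hj (by omega) i.2)
    · have hne : (i:ℕ) ≠ m-1-j := fun hc => h3 (congrArg (pp3 m) hc)
      exact hxV (hid_p3 hj (by omega))
    · have hne : ((π i):ℕ) ≠ m-1-j := by
        intro hc
        apply h4
        apply congrArg (qq m π)
        have : π i = π (qidx m π hm j) := Fin.ext (by rw [qidx_pi]; exact hc)
        exact π.injective this
      exact hxV (hid_q hm hj i (by omega))
  · intro x hx
    have hxR := lay_subset_Rem hm hj hx
    simp only [hullVertices, Set.mem_setOf_eq]
    refine ⟨hxR, ?_⟩
    rcases hx with rfl|rfl|rfl|rfl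
    · exact vert_p1 hj
    · exact vert_p2 hj
    · exact vert_p3 hm hj
    · exact vert_q hm hj

lemma Rem_antitone {j j' : ℕ} (h : j ≤ j') : Rem m π j' ⊆ Rem m π j := by
  rintro x (⟨i,hi,rfl⟩|⟨i,hi,rfl⟩|⟨i,hi,rfl⟩|⟨i,hi,rfl⟩)
  · exact Or.inl ⟨i, by omega, rfl⟩
  · exact Or.inr (Or.inl ⟨i, by omega, rfl⟩)
  · exact Or.inr (Or.inr (Or.inl ⟨i, by omega, rfl⟩))
  · exact Or.inr (Or.inr (Or.inr ⟨i, by omega, rfl⟩))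

lemma Rem_succ (hm : 0 < m) {j : ℕ} (hj : j < m) :
    Rem m π j \ lay m π hm j = Rem m π (j+1) := by
  have hk : m-1-j < m := by omega
  ext x
  simp only [Set.mem_diff]
  constructor
  · rintro ⟨hR, hL⟩
    simp only [lay, Set.mem_insert_iff, Set.mem_singleton_iff, not_or] at hL
    obtain ⟨h1, h2, h3, h4⟩ := hL
    rcases hR with ⟨i,hi,rfl⟩|⟨i,hi,rfl⟩|⟨i,hi,rfl⟩|⟨i,hi,rfl⟩
    · have hne : (i:ℕ) ≠ j := fun hc => h1 (congrArg (pp1 m) hc)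
      exact Or.inl ⟨i, by omega, rfl⟩
    · have hne : (i:ℕ) ≠ j := fun hc => h2 (congrArg (pp2 m) hc)
      exact Or.inr (Or.inl ⟨i, by omega, rfl⟩)
    · have hne : (i:ℕ) ≠ m-1-j := fun hc => h3 (congrArg (pp3 m) hc)
      exact Or.inr (Or.inr (Or.inl ⟨i, by omega, rfl⟩))
    · have hne : ((π i):ℕ) ≠ m-1-j := by
        intro hc
        apply h4
        apply congrArg (qq m π)
        have : π i = π (qidx m π hm j) := Fin.ext (by rw [qidx_pi]; exact hc)
        exact π.injective this
      exact Or.inr (Or.inr (Or.inr ⟨i, by omega, rfl⟩))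
  · intro hR
    refine ⟨Rem_antitone (by omega) hR, ?_⟩
    simp only [lay, Set.mem_insert_iff, Set.mem_singleton_iff, not_or]
    rcases hR with ⟨i,hi,rfl⟩|⟨i,hi,rfl⟩|⟨i,hi,rfl⟩|⟨i,hi,rfl⟩
    · exact ⟨fun h => absurd (pp1_inj h) (by omega), ne12 i.2 hj, ne13 i.2 hk,
        ne1q i.2 _⟩
    · exact ⟨(ne12 hj i.2).symm, fun h => absurd (pp2_inj h) (by omega), ne23 i.2 hk,
        ne2q i.2 _⟩
    · exact ⟨(ne13 hj i.2).symm, (ne23 hj i.2).symm,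
        fun h => absurd (pp3_inj h) (by omega), ne3q i.2 _⟩
    · refine ⟨(ne1q hj i).symm, (ne2q hj i).symm, (ne3q hk i).symm, ?_⟩
      intro h
      have := qq_inj h
      have h2 := qidx_pi (π := π) hm j
      rw [← this] at h2
      omega

lemma Rem_m : Rem m π m = ∅ := by
  ext x
  simp only [Set.mem_empty_iff_false, iff_false]
  rintro (⟨i,hi,rfl⟩|⟨i,hi,rfl⟩|⟨i,hi,rfl⟩|⟨i,hi,rfl⟩)
  · exact absurd hi (by have := i.2; omega)
  · exact absurd hi (by have := i.2; omega)
  · omega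
  · omega

end Aux5

theorem test_main
    (n m : ℕ) (hm : 0 < m) (hn : n = 4 * m) (π : Equiv.Perm (Fin m)) :
    ∃ L : List (Set (ℝ × ℝ)),
        IsOnionDecomp (Set.range (fun i : Fin m => pp1 m i) ∪ Set.range (fun i : Fin m => pp2 m i)
          ∪ Set.range (fun i : Fin m => pp3 m i) ∪ Set.range (qq m π)) L ∧
        L.length = m ∧
        (∀ j < m, ∃! i : Fin m, qq m π i ∈ L.getD j ∅) ∧
        (∀ i : Fin m, qq m π i ∈ L.getD (m - 1 - (π i : ℕ)) ∅) := by
  set P : Set (ℝ×ℝ) := Set.range (fun i : Fin m => pp1 m i) ∪ Set.range (fun i : Fin m => pp2 m i)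
          ∪ Set.range (fun i : Fin m => pp3 m i) ∪ Set.range (qq m π) with hPdef
  set L : List (Set (ℝ×ℝ)) := (List.range m).map (lay m π hm) with hLdef
  have hlen : L.length = m := by simp [hLdef]
  have hget : ∀ j, j < m → L.getD j ∅ = lay m π hm j := by
    intro j hj
    rw [List.getD_eq_getElem _ _ (by simpa [hlen] using hj)]
    simp [hLdef]
  have hP : P = Rem m π 0 := by
    ext x
    simp only [hPdef, Set.mem_union, Set.mem_range]
    constructor
    · rintro (((⟨i,rfl⟩|⟨i,rfl⟩)|⟨i,rfl⟩)|⟨i,rfl⟩)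
      · exact Or.inl ⟨i, by omega, rfl⟩
      · exact Or.inr (Or.inl ⟨i, by omega, rfl⟩)
      · exact Or.inr (Or.inr (Or.inl ⟨i, by have := i.2; omega, rfl⟩))
      · exact Or.inr (Or.inr (Or.inr ⟨i, by have := (π i).2; omega, rfl⟩))
    · rintro (⟨i,hi,rfl⟩|⟨i,hi,rfl⟩|⟨i,hi,rfl⟩|⟨i,hi,rfl⟩)
      · exact Or.inl (Or.inl (Or.inl ⟨i, rfl⟩))
      · exact Or.inl (Or.inl (Or.inr ⟨i, rfl⟩))
      · exact Or.inl (Or.inr ⟨i, rfl⟩)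
      · exact Or.inr ⟨i, rfl⟩
  have dP : ∀ i, i ≤ m → P \ (⋃ j ∈ Finset.range i, L.getD j ∅) = Rem m π i := by
    intro i
    induction i with
    | zero => intro _; simp [hP]
    | succ k ih =>
      intro hk
      have hkm : k < m := by omega
      rw [Finset.range_add_one, Finset.set_biUnion_insert, Set.union_comm, ← Set.diff_diff,
        ih (by omega), hget k hkm, Rem_succ hm hkm]
  have hUU : (⋃₀ {S | S ∈ L}) = ⋃ j ∈ Finset.range m, L.getD j ∅ := by
    ext y
    simp only [Set.mem_sUnion, Set.mem_setOf_eq, Set.mem_iUnion, Finset.mem_range]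
    constructor
    · rintro ⟨S, hS, hyS⟩
      simp only [hLdef, List.mem_map, List.mem_range] at hS
      obtain ⟨j, hj, rfl⟩ := hS
      exact ⟨j, hj, by rw [hget j hj]; exact hyS⟩
    · rintro ⟨j, hj, hy⟩
      rw [hget j hj] at hy
      exact ⟨lay m π hm j, by simp [hLdef, List.mem_map, List.mem_range]; exact ⟨j, hj, rfl⟩, hy⟩
  refine ⟨L, ⟨?_, ?_, ?_, ?_, ?_⟩, hlen, ?_, ?_⟩
  · -- L ≠ []
    intro h
    have := congrArg List.length h
    rw [hlen] at this
    simp at this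
    omega
  · -- nonempty
    intro S hS
    simp only [hLdef, List.mem_map, List.mem_range] at hS
    obtain ⟨j, hj, rfl⟩ := hS
    exact ⟨pp1 m j, Or.inl rfl⟩
  · -- pairwise disjoint
    rw [hLdef, List.pairwise_map]
    refine List.Pairwise.imp_of_mem ?_ List.pairwise_lt_range
    intro a b ha hb hab
    rw [List.mem_range] at ha hb
    rw [Set.disjoint_left]
    intro x hxa hxb
    have hx : x ∈ Rem m π (a+1) := Rem_antitone (by omega) (lay_subset_Rem hm hb hxb)
    rw [← Rem_succ hm ha] at hx
    exact hx.2 hxa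
  · -- union
    rw [hUU]
    apply Set.Subset.antisymm
    · intro x hx
      simp only [Set.mem_iUnion, Finset.mem_range] at hx
      obtain ⟨j, hj, hxj⟩ := hx
      rw [hget j hj] at hxj
      rw [hP]
      exact Rem_antitone (by omega) (lay_subset_Rem hm hj hxj)
    · intro x hx
      by_contra hnx
      have : x ∈ P \ (⋃ j ∈ Finset.range m, L.getD j ∅) := ⟨hx, hnx⟩
      rw [dP m le_rfl, Rem_m] at this
      exact this
  · -- layers are hull vertices
    intro i hi
    have him : i < m := by rwa [hlen] at hi
    rw [hget i him, dP i him.le, hv_eq hm him]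
  · -- unique q in each layer
    intro j hj
    rw [hget j hj]
    refine ⟨qidx m π hm j, by simp [lay], ?_⟩
    intro i' hi'
    simp only [lay, Set.mem_insert_iff, Set.mem_singleton_iff] at hi'
    rcases hi' with h|h|h|h
    · exact absurd h (ne1q hj i').symm
    · exact absurd h (ne2q hj i').symm
    · exact absurd h (ne3q (by omega) i').symm
    · exact qq_inj h
  · -- q i in layer m-1-π i
    intro i
    have hπ : ((π i):ℕ) < m := (π i).2
    have hj : m-1-((π i):ℕ) < m := by omega
    rw [hget _ hj]
    have hq : qidx m π hm (m-1-((π i):ℕ)) = i := by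
      unfold qidx
      have : (⟨m-1-(m-1-((π i):ℕ)), by omega⟩ : Fin m) = π i := Fin.ext (by simp; omega)
      rw [this]
      exact π.symm_apply_apply i
    simp [lay, hq]

theorem test_fam (n m : ℕ) (hm : 0 < m) (hn : n = 4 * m) (π : Equiv.Perm (Fin m)) :
    InFamilyF n m (fun i : Fin m => pp1 m i) (fun i : Fin m => pp2 m i)
      (fun i : Fin m => pp3 m i) (qq m π) := by
  subst hn
  refine ⟨?_, ?_, ?_, ?_, ?_, ?_, ?_⟩
  · intro i
    refine ⟨1 - tv m i, tv m i, by linarith [tv_lt_one i.2], tv_pos m _, by ring, ?_⟩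
    simp only [Prod.smul_mk, smul_eq_mul, Prod.mk_add_mk, pp1, Prod.mk.injEq]
    constructor <;> (push_cast; ring)
  · intro a b hab
    have := tv_mono (m := m) (Fin.lt_iff_val_lt_val.mp hab)
    simp only [pp1]
    simpa using this
  · intro i
    refine ⟨1 - tv m i, tv m i, by linarith [tv_lt_one i.2], tv_pos m _, by ring, ?_⟩
    simp only [Prod.smul_mk, smul_eq_mul, Prod.mk_add_mk, pp2, Prod.mk.injEq]
    constructor <;> (push_cast; ring)
  · intro a b hab
    have := tv_mono (m := m) (Fin.lt_iff_val_lt_val.mp hab)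
    simp only [pp2]
    simpa using this
  · intro i
    refine ⟨1 - tv m i, tv m i, by linarith [tv_lt_one i.2], tv_pos m _, by ring, ?_⟩
    simp only [Prod.smul_mk, smul_eq_mul, Prod.mk_add_mk, pp3, Prod.mk.injEq]
    constructor <;> (push_cast; ring)
  · intro a b hab
    have := tv_mono (m := m) (Fin.lt_iff_val_lt_val.mp hab)
    simp only [pp3]
    simpa using this
  · intro i
    refine ⟨1 - sv m π i, sv m π i, by linarith [sv_lt_one m π i], sv_pos m π i, by ring, ?_⟩
    simp only [Prod.smul_mk, smul_eq_mul, Prod.mk_add_mk, qq, Prod.mk.injEq]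
    constructor <;> (push_cast; ring)

/-- For every permutation `π` of `{1, …, n/4}` there is a member of `F_n` whose onion
layer decomposition has exactly `n/4` layers, each layer containing exactly one point of
`Q`, with `q_i` lying in layer `S_{n/4 + 1 - π(i)}` (0-based index `m - 1 - π(i)`). -/
theorem familyF_realises_every_permutation
    (n m : ℕ) (hm : 0 < m) (hn : n = 4 * m) (π : Equiv.Perm (Fin m)) :
    ∃ p1 p2 p3 q : Fin m → ℝ × ℝ,
      InFamilyF n m p1 p2 p3 q ∧
      ∃ L : List (Set (ℝ × ℝ)),
        IsOnionDecomp (Set.range p1 ∪ Set.range p2 ∪ Set.range p3 ∪ Set.range q) L ∧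
        L.length = m ∧
        (∀ j < m, ∃! i : Fin m, q i ∈ L.getD j ∅) ∧
        (∀ i : Fin m, q i ∈ L.getD (m - 1 - (π i : ℕ)) ∅) := by
    refine ⟨fun i : Fin m => pp1 m i, fun i : Fin m => pp2 m i, fun i : Fin m => pp3 m i,
      qq m π, test_fam n m hm hn π, test_main n m hm hn π⟩
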